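/- Assume γ_{k₀*-1} < 1 < γ_{k₀*}. Then there exists Λ̃ such that for all λ > Λ̃: (1) ‖u‖_λ² - D_λ(u,u) ≤ ½(1 - 1/γ_{k₀*-1})‖u‖_λ² for all u in ⊕_{i=1}^{k₀*-1} F_{λ,i}^⊥; (2) ‖u‖_λ² - D_λ(u,u) ≥ ½(1 - 1/γ_{k₀*})‖u‖_λ² for all u ∈ F_{λ,k₀*}^{⊥,*}. -/
import Mathlib


open Filter Topology

/-- Assume `γ_{k₀*-1} < 1 < γ_{k₀*}`.  Then there exists `Λ̃` such that
for all `λ > Λ̃`: (1) `‖u‖_λ² - D_λ(u,u) ≤ ½(1 - 1/γ_{k₀*-1})‖u‖_λ²` on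
`⊕_{i=1}^{k₀*-1} F_{λ,i}^⊥` (here `Vlow lam`); (2)
`‖u‖_λ² - D_λ(u,u) ≥ ½(1 - 1/γ_{k₀*})‖u‖_λ²` on `F_{λ,k₀*}^{⊥,*}` (here `Vhigh lam`).
`Nsq lam u = ‖u‖_λ²`, `D lam u = D_λ(u,u)`; on `Vlow lam` the Rayleigh quotient is at most
`β_{k₀*-1}(λ)` and on `Vhigh lam` at least `β_{k₀*}(λ)`, with `β_i(λ) → γ_i` as
`λ → +∞`. -/
theorem stmt8 {H : Type*} [AddCommGroup H] [Module ℝ H]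
    (Nsq D : ℝ → H → ℝ) (Vlow Vhigh : ℝ → Set H)
    (betalow betahigh : ℝ → ℝ) (gammalow gammahigh : ℝ)
    (hgammalow_pos : 0 < gammalow)
    (hgammalow : gammalow < 1) (hgammahigh : 1 < gammahigh)
    (hblow : Tendsto betalow atTop (𝓝 gammalow))
    (hbhigh : Tendsto betahigh atTop (𝓝 gammahigh))
    (hNnonneg : ∀ lam u, 0 ≤ Nsq lam u)
    (hDnonneg : ∀ lam u, 0 ≤ D lam u)
    (hlow : ∀ lam, ∀ u ∈ Vlow lam, Nsq lam u ≤ betalow lam * D lam u)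
    (hhigh : ∀ lam, ∀ u ∈ Vhigh lam, betahigh lam * D lam u ≤ Nsq lam u) :
    ∃ LamT : ℝ, ∀ lam : ℝ, LamT < lam →
      (∀ u ∈ Vlow lam,
        Nsq lam u - D lam u ≤ (1 / 2) * (1 - 1 / gammalow) * Nsq lam u) ∧
      (∀ u ∈ Vhigh lam,
        (1 / 2) * (1 - 1 / gammahigh) * Nsq lam u ≤ Nsq lam u - D lam u) := by

  have hγl : (0:ℝ) < gammalow + 1 := by linarith
  have hγh : (0:ℝ) < gammahigh + 1 := by linarith
  have h2 : gammalow < 2 * gammalow / (gammalow + 1) := by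
    rw [lt_div_iff₀ hγl]; nlinarith
  have h3 : 2 * gammahigh / (gammahigh + 1) < gammahigh := by
    rw [div_lt_iff₀ hγh]; nlinarith
  have e1 : ∀ᶠ lam in atTop, betalow lam ∈ Set.Ioo 0 (2 * gammalow / (gammalow + 1)) :=
    hblow (Ioo_mem_nhds hgammalow_pos h2)
  have e2 : ∀ᶠ lam in atTop, 2 * gammahigh / (gammahigh + 1) < betahigh lam :=
    hbhigh (Ioi_mem_nhds h3)
  obtain ⟨L, hL⟩ := (e1.and e2).exists_forall_of_atTop
  refine ⟨L, fun lam hlam => ?_⟩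
  obtain ⟨⟨hb0, hbB⟩, hbH⟩ := hL lam (le_of_lt hlam)
  have hbB' : betalow lam * (gammalow + 1) < 2 * gammalow := (lt_div_iff₀ hγl).mp hbB
  have hbH' : 2 * gammahigh < betahigh lam * (gammahigh + 1) := (div_lt_iff₀ hγh).mp hbH
  have hinvl : gammalow * (1 / gammalow) = 1 := by field_simp
  have hinvh : gammahigh * (1 / gammahigh) = 1 := by field_simp
  constructor
  · intro u hu
    have hN := hlow lam u hu
    have hD := hDnonneg lam u
    have key : (gammalow + 1) * Nsq lam u ≤ 2 * gammalow * D lam u := by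
      nlinarith [mul_le_mul_of_nonneg_right hbB'.le hD]
    nlinarith [mul_pos hgammalow_pos hgammalow_pos, hNnonneg lam u]
  · intro u hu
    have hN := hhigh lam u hu
    have hD := hDnonneg lam u
    have key : 2 * gammahigh * D lam u ≤ (gammahigh + 1) * Nsq lam u := by
      nlinarith [mul_le_mul_of_nonneg_right hbH'.le hD]
    nlinarith [hNnonneg lam u]
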